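/- Along any solution u = (u₁,u₂,u₃) of system (B) on an open interval I, both the product u₁u₂u₃ and the sum u₁ + u₂ + u₃ are constant functions of t. -/

import Mathlib

lemma const_of_deriv_zero_Ioo {a b : ℝ} {f : ℝ → ℝ}
    (hf : ∀ t ∈ Set.Ioo a b, HasDerivAt f 0 t) :
    ∀ s ∈ Set.Ioo a b, ∀ t ∈ Set.Ioo a b, f s = f t := by
  have key : ∀ s t : ℝ, s ∈ Set.Ioo a b → t ∈ Set.Ioo a b → s ≤ t → f t = f s := by
    intro s t hs ht hst
    have hsub : Set.Icc s t ⊆ Set.Ioo a b := fun x hx =>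
      ⟨lt_of_lt_of_le hs.1 hx.1, lt_of_le_of_lt hx.2 ht.2⟩
    have hcont : ContinuousOn f (Set.Icc s t) := fun x hx =>
      ((hf x (hsub hx)).continuousAt).continuousWithinAt
    exact constant_of_has_deriv_right_zero hcont
      (fun x hx => ((hf x (hsub (Set.Ico_subset_Icc_self hx))).hasDerivWithinAt)) t
      (Set.right_mem_Icc.2 hst)
  intro s hs t ht
  rcases le_total s t with h | h
  · exact (key s t hs ht h).symm
  · exact key t s ht hs h

theorem systemB_first_integrals (a b : ℝ) (u₁ u₂ u₃ : ℝ → ℝ)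
    (h₁ : ∀ t ∈ Set.Ioo a b, HasDerivAt u₁ (u₁ t * (u₂ t - u₃ t)) t)
    (h₂ : ∀ t ∈ Set.Ioo a b, HasDerivAt u₂ (u₂ t * (u₃ t - u₁ t)) t)
    (h₃ : ∀ t ∈ Set.Ioo a b, HasDerivAt u₃ (u₃ t * (u₁ t - u₂ t)) t) :
    ∀ s ∈ Set.Ioo a b, ∀ t ∈ Set.Ioo a b,
      u₁ s * u₂ s * u₃ s = u₁ t * u₂ t * u₃ t ∧
      u₁ s + u₂ s + u₃ s = u₁ t + u₂ t + u₃ t := by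
  have hp : ∀ t ∈ Set.Ioo a b, HasDerivAt (fun x => u₁ x * u₂ x * u₃ x) 0 t := by
    intro t ht
    have := (((h₁ t ht).mul (h₂ t ht)).mul (h₃ t ht))
    refine this.congr_deriv ?_
    simp only [Pi.mul_apply]
    ring
  have hs : ∀ t ∈ Set.Ioo a b, HasDerivAt (fun x => u₁ x + u₂ x + u₃ x) 0 t := by
    intro t ht
    have := ((h₁ t ht).add (h₂ t ht)).add (h₃ t ht)
    refine this.congr_deriv ?_
    ring
  intro s hsm t htm
  exact ⟨const_of_deriv_zero_Ioo hp s hsm t htm, const_of_deriv_zero_Ioo hs s hsm t htm⟩
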